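/- arXiv:1901.02093 — 4 statements merged into one kernel-verified Lean document; each statement's English description precedes it below -/
import Mathlib

section
/- Let f be a function holomorphic on the open annulus {z : r₁ < |z| < r₃} and continuous on its closure, where 0 < r₁ < r₂ < r₃. Set M(r) := sup_{|z|=r} |f(z)| and θ := ln(r₃/r₂)/ln(r₃/r₁). Then M(r₂) ≤ M(r₁)^θ · M(r₃)^{1−θ}. -/
open Complex Set Metric

theorem stmt8 (f : ℂ → ℂ) (r₁ r₂ r₃ : ℝ) (h1 : 0 < r₁) (h12 : r₁ < r₂) (h23 : r₂ < r₃)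
    (hf : DifferentiableOn ℂ f {z : ℂ | r₁ < ‖z‖ ∧ ‖z‖ < r₃})
    (hfc : ContinuousOn f {z : ℂ | r₁ ≤ ‖z‖ ∧ ‖z‖ ≤ r₃})
    (M : ℝ → ℝ)
    (hM : ∀ r, M r = sSup ((fun z => ‖f z‖) '' Metric.sphere (0 : ℂ) r))
    (θ : ℝ) (hθ : θ = Real.log (r₃ / r₂) / Real.log (r₃ / r₁)) :
    M r₂ ≤ M r₁ ^ θ * M r₃ ^ (1 - θ) := by
  have h2 : (0:ℝ) < r₂ := h1.trans h12
  have h3 : (0:ℝ) < r₃ := h2.trans h23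
  set a := Real.log r₁ with ha
  set b := Real.log r₃ with hb
  have hab : a < b := Real.log_lt_log h1 (h12.trans h23)
  have hba : 0 < b - a := sub_pos.2 hab
  -- the exponential map from the strip to the annulus
  set e : ℂ → ℂ := fun z => Complex.exp ((a : ℂ) + ((b - a : ℝ) : ℂ) * z) with he
  have habs : ∀ z : ℂ, ‖e z‖ = Real.exp (a + (b - a) * z.re) := by
    intro z
    rw [he]
    simp [Complex.norm_exp]
  -- K : the closed annulus
  set K : Set ℂ := {z : ℂ | r₁ ≤ ‖z‖ ∧ ‖z‖ ≤ r₃} with hK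
  have hKc : IsCompact K := by
    have : K = (fun z : ℂ => ‖z‖) ⁻¹' (Icc r₁ r₃) := rfl
    refine (isCompact_closedBall (0:ℂ) r₃).of_isClosed_subset ?_ ?_
    · rw [this]
      exact (isClosed_Icc).preimage continuous_norm
    · intro z hz
      simpa [Complex.dist_eq] using hz.2
  -- sphere images bdd above
  have hbdd : ∀ r, r₁ ≤ r → r ≤ r₃ → BddAbove ((fun z => ‖f z‖) '' sphere (0:ℂ) r) := by
    intro r hr1 hr3
    have hsub : sphere (0:ℂ) r ⊆ K := by
      intro z hz
      simp only [mem_sphere_iff_norm, sub_zero] at hz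
      exact ⟨hz ▸ hr1, hz ▸ hr3⟩
    have : ContinuousOn (fun z => ‖f z‖) (sphere (0:ℂ) r) :=
      continuous_norm.comp_continuousOn (hfc.mono hsub)
    exact ((isCompact_sphere (0:ℂ) r).image_of_continuousOn this).bddAbove
  have hMle : ∀ r, r₁ ≤ r → r ≤ r₃ → ∀ z ∈ sphere (0:ℂ) r, ‖f z‖ ≤ M r := by
    intro r hr1 hr3 z hz
    rw [hM]
    exact le_csSup (hbdd r hr1 hr3) ⟨z, hz, rfl⟩
  have hMnonneg : ∀ r, 0 ≤ M r := by
    intro r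
    rw [hM]
    exact Real.sSup_nonneg (by rintro y ⟨z, _, rfl⟩; exact (norm_nonneg _))
  -- g on strip
  set g : ℂ → ℂ := fun z => f (e z) with hg
  -- e maps closed strip into K
  have hemapcl : ∀ z ∈ Complex.HadamardThreeLines.verticalClosedStrip 0 1, e z ∈ K := by
    intro z hz
    obtain ⟨hz0, hz1⟩ := hz
    rw [hK, mem_setOf_eq, habs]
    constructor
    · rw [← Real.exp_log h1]
      apply Real.exp_le_exp.2; nlinarith
    · rw [← Real.exp_log h3]
      apply Real.exp_le_exp.2; nlinarith
  have hemapop : ∀ z ∈ Complex.HadamardThreeLines.verticalStrip 0 1,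
      e z ∈ {z : ℂ | r₁ < ‖z‖ ∧ ‖z‖ < r₃} := by
    intro z hz
    obtain ⟨hz0, hz1⟩ := hz
    rw [mem_setOf_eq, habs]
    constructor
    · rw [← Real.exp_log h1]
      apply Real.exp_lt_exp.2; nlinarith
    · rw [← Real.exp_log h3]
      apply Real.exp_lt_exp.2; nlinarith
  have hediff : Differentiable ℂ e := by
    apply Complex.differentiable_exp.comp
    exact (differentiable_const _).add ((differentiable_const _).mul differentiable_id)
  have hd : DiffContOnCl ℂ g (Complex.HadamardThreeLines.verticalStrip 0 1) := by
    constructor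
    · exact hf.comp (hediff.differentiableOn) hemapop
    · have hclosure : closure (Complex.HadamardThreeLines.verticalStrip 0 1) =
          Complex.HadamardThreeLines.verticalClosedStrip 0 1 := by
        rw [Complex.HadamardThreeLines.verticalStrip,
          Complex.HadamardThreeLines.verticalClosedStrip, ← closure_Ioo (zero_ne_one),
          closure_preimage_re]
      rw [hclosure]
      exact hfc.comp hediff.continuous.continuousOn hemapcl
  have hB : BddAbove ((norm ∘ g) '' (Complex.HadamardThreeLines.verticalClosedStrip 0 1)) := by
    obtain ⟨C, hC⟩ := (hKc.image_of_continuousOn (continuous_norm.comp_continuousOn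
      hfc)).bddAbove
    refine ⟨C, ?_⟩
    rintro y ⟨z, hz, rfl⟩
    exact hC ⟨e z, hemapcl z hz, rfl⟩
  have ha0 : ∀ z ∈ Complex.re ⁻¹' {(0:ℝ)}, ‖g z‖ ≤ M r₁ := by
    intro z hz
    have : e z ∈ sphere (0:ℂ) r₁ := by
      simp only [mem_sphere_iff_norm, sub_zero, habs]
      simp only [mem_preimage, mem_singleton_iff] at hz
      rw [hz]; simp [ha, Real.exp_log h1]
    exact hMle r₁ le_rfl (h12.trans h23).le _ this
  have hb1 : ∀ z ∈ Complex.re ⁻¹' {(1:ℝ)}, ‖g z‖ ≤ M r₃ := by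
    intro z hz
    have : e z ∈ sphere (0:ℂ) r₃ := by
      simp only [mem_sphere_iff_norm, sub_zero, habs]
      simp only [mem_preimage, mem_singleton_iff] at hz
      rw [hz]; simp [hb, Real.exp_log h3]
    exact hMle r₃ (h12.trans h23).le le_rfl _ this
  -- key parameter
  set t : ℝ := (Real.log r₂ - a) / (b - a) with ht
  have ht0 : 0 ≤ t := by
    apply div_nonneg _ hba.le
    have := Real.log_le_log h1 h12.le
    linarith
  have ht1 : t ≤ 1 := by
    rw [div_le_one hba]
    have := Real.log_le_log h2 h23.le
    linarith
  have htexp : a + (b - a) * t = Real.log r₂ := by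
    rw [ht]
    field_simp
    ring
  have hθt : θ = 1 - t := by
    rw [hθ, ht, Real.log_div h3.ne' h2.ne', Real.log_div h3.ne' h1.ne']
    field_simp
    rw [show Real.log r₃ - Real.log r₁ = b - a from rfl, mul_div_assoc, div_self hba.ne', mul_one]
    ring
  -- main bound pointwise on sphere r₂
  have key : ∀ w ∈ sphere (0:ℂ) r₂, ‖f w‖ ≤ M r₁ ^ θ * M r₃ ^ (1 - θ) := by
    intro w hw
    have hwabs : ‖w‖ = r₂ := by
      simpa [Complex.dist_eq] using hw
    set z : ℂ := (t : ℂ) + ((Complex.arg w / (b - a) : ℝ) : ℂ) * Complex.I with hz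
    have hzre : z.re = t := by
      simp only [hz, Complex.add_re, Complex.mul_re, Complex.ofReal_re, Complex.ofReal_im,
        Complex.I_re, Complex.I_im]
      ring
    have hez : e z = w := by
      show Complex.exp ((a : ℂ) + ((b - a : ℝ) : ℂ) * z) = w
      have hs : ((b - a : ℝ) : ℂ) * ((Complex.arg w / (b - a) : ℝ) : ℂ)
          = (Complex.arg w : ℂ) := by
        rw [← Complex.ofReal_mul, mul_div_cancel₀ _ hba.ne']
      have heq : (a : ℂ) + ((b - a : ℝ) : ℂ) * z
          = ((a + (b - a) * t : ℝ) : ℂ) + ((Complex.arg w : ℝ) : ℂ) * Complex.I := by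
        rw [hz, mul_add, ← mul_assoc, hs]
        push_cast
        ring
      rw [heq, Complex.exp_add, htexp]
      rw [← Complex.ofReal_exp, Real.exp_log h2, ← hwabs]
      exact Complex.norm_mul_exp_arg_mul_I w
    have hzmem : z ∈ Complex.HadamardThreeLines.verticalClosedStrip 0 1 := by
      simp [Complex.HadamardThreeLines.verticalClosedStrip, hzre, ht0, ht1]
    have := Complex.HadamardThreeLines.norm_le_interp_of_mem_verticalClosedStrip' (f := g) zero_lt_one
      hzmem hd hB ha0 hb1
    rw [hzre] at this
    have hgz : ‖g z‖ = ‖f w‖ := by rw [hg]; simp [hez]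
    rw [hgz] at this
    rw [hθt]
    convert this using 2
    all_goals ring_nf
  -- conclude
  rw [hM r₂]
  apply Real.sSup_le
  · rintro y ⟨w, hw, rfl⟩
    exact key w hw
  · exact mul_nonneg (Real.rpow_nonneg (hMnonneg r₁) _) (Real.rpow_nonneg (hMnonneg r₃) _)
end

section
/- Let G : ℂ → (functions on ℂ) be given by G(z)(ζ) := exp(−(z−ζ)²), and fix a continuous weight ν : ℂ → (0,∞) of the form ν(ζ) = exp(a·|Re ζ|^γ) with a ∈ ℝ, 0 < γ ≤ 1. Let S ⊂ ℂ be a horizontal strip {ζ : |Im ζ| ≤ h} for some h > 0. Then for every z₀ ∈ ℂ, the map z ↦ G(z) is differentiable at z₀ with respect to the sup-norm ‖F‖ := sup_{ζ ∈ S} |F(ζ)|·ν(ζ)^{−1}; that is, (G(z₀+h') − G(z₀))/h' converges in this norm, as h' → 0 in ℂ∖{0}, to the function ζ ↦ −2(z₀−ζ)·exp(−(z₀−ζ)²). -/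
open Real Complex


lemma aux_exp_bound (u : ℂ) :
    ‖Complex.exp u - 1 - u‖ ≤ 3 * ‖u‖ ^ 2 * Real.exp (‖u‖) := by
  rcases le_or_gt (‖u‖) 1 with hu | hu
  · have h1 := Complex.norm_exp_sub_one_sub_id_le hu
    have h2 : (1:ℝ) ≤ Real.exp (‖u‖) := Real.one_le_exp (norm_nonneg u)
    nlinarith [sq_nonneg (‖u‖)]
  · have h1 : ‖Complex.exp u - 1 - u‖ ≤
        ‖Complex.exp u‖ + 1 + ‖u‖ := by
      calc ‖Complex.exp u - 1 - u‖
          ≤ ‖Complex.exp u - 1‖ + ‖u‖ :=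
            norm_sub_le _ u
        _ ≤ ‖Complex.exp u‖ + ‖(1:ℂ)‖ + ‖u‖ := by
            linarith [norm_sub_le (Complex.exp u) 1]
        _ = ‖Complex.exp u‖ + 1 + ‖u‖ := by simp
    have h2 : ‖Complex.exp u‖ ≤ Real.exp (‖u‖) := by
      rw [Complex.norm_exp]
      exact Real.exp_le_exp.2 (le_trans (le_abs_self _) (Complex.abs_re_le_norm u))
    have h3 : ‖u‖ ≤ Real.exp (‖u‖) := by
      have := Real.add_one_le_exp (‖u‖); linarith
    have h4 : (1:ℝ) ≤ Real.exp (‖u‖) := Real.one_le_exp (norm_nonneg u)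
    have h5 : (1:ℝ) ≤ ‖u‖ ^ 2 := by nlinarith
    nlinarith [mul_nonneg (by linarith : (0:ℝ) ≤ ‖u‖ ^ 2 - 1)
      (Real.exp_pos (‖u‖)).le]

lemma aux_sq_le (x : ℝ) (hx : 0 ≤ x) : x ^ 2 ≤ 4 * Real.exp x := by
  have h1 := Real.add_one_le_exp (x/2)
  have h2 : Real.exp x = Real.exp (x/2) * Real.exp (x/2) := by
    rw [← Real.exp_add]; ring_nf
  nlinarith [Real.exp_pos (x/2)]

lemma aux_main (B cA cR t s W H : ℝ) (hB : 0 ≤ B) (hW : 0 ≤ W) (ht : 0 ≤ t)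
    (hWtB : W ≤ t + B) (hs : s ≤ t + cR) (hH : 0 ≤ H) (hcA : 0 ≤ cA) :
    Real.exp (B^2 - t^2) * (3*(2*W+1)^2 * Real.exp (2*W+1) * H + H) * Real.exp (cA*(1+s))
      ≤ H * (13 * Real.exp ((6+cA)^2/4 + (6*B+3 + B^2 + cA*(1+cR)))) := by
  have hb : 3*(2*W+1)^2 * Real.exp (2*W+1) + 1 ≤ 13 * Real.exp (6*W+3) := by
    have h1 := aux_sq_le (2*W+1) (by linarith)
    have e := Real.exp_pos (2*W+1)
    have e1 : (1:ℝ) ≤ Real.exp (2*W+1) := Real.one_le_exp (by linarith)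
    have h2 : Real.exp (6*W+3) = Real.exp (2*W+1) * Real.exp (2*W+1) * Real.exp (2*W+1) := by
      rw [← Real.exp_add, ← Real.exp_add]; ring_nf
    nlinarith [mul_le_mul_of_nonneg_right h1 e.le,
      mul_le_mul_of_nonneg_left e1 (mul_nonneg e.le e.le)]
  calc Real.exp (B^2 - t^2) * (3*(2*W+1)^2 * Real.exp (2*W+1) * H + H) * Real.exp (cA*(1+s))
      = Real.exp (B^2 - t^2) * ((3*(2*W+1)^2 * Real.exp (2*W+1) + 1) * H) *
          Real.exp (cA*(1+s)) := by ring
    _ ≤ Real.exp (B^2 - t^2) * ((13 * Real.exp (6*W+3)) * H) * Real.exp (cA*(1+s)) := by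
        gcongr
    _ = (13 * H) * Real.exp (B^2 - t^2 + (6*W+3) + cA*(1+s)) := by
        rw [Real.exp_add (B^2 - t^2 + (6*W+3)), Real.exp_add (B^2 - t^2)]; ring
    _ ≤ (13 * H) * Real.exp ((6+cA)^2/4 + (6*B+3 + B^2 + cA*(1+cR))) := by
        have hexp : B^2 - t^2 + (6*W+3) + cA*(1+s)
            ≤ (6+cA)^2/4 + (6*B+3 + B^2 + cA*(1+cR)) := by
          have h1 : cA * (1+s) ≤ cA * (1 + (t + cR)) := by
            apply mul_le_mul_of_nonneg_left _ hcA; linarith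
          nlinarith [sq_nonneg (t - (6+cA)/2)]
        exact mul_le_mul_of_nonneg_left (Real.exp_le_exp.2 hexp)
          (by positivity)
    _ = H * (13 * Real.exp ((6+cA)^2/4 + (6*B+3 + B^2 + cA*(1+cR)))) := by ring



theorem stmt11 (a γ h : ℝ) (hγ0 : 0 < γ) (hγ1 : γ ≤ 1) (hh : 0 < h) (z₀ : ℂ) :
    ∀ ε > 0, ∃ δ > 0, ∀ h' : ℂ, h' ≠ 0 → ‖h'‖ < δ →
      ∀ ζ : ℂ, |ζ.im| ≤ h →
        ‖(Complex.exp (-(z₀ + h' - ζ) ^ 2) - Complex.exp (-(z₀ - ζ) ^ 2)) / h' -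
            (-2 * (z₀ - ζ) * Complex.exp (-(z₀ - ζ) ^ 2))‖ *
          (Real.exp (a * |ζ.re| ^ γ))⁻¹ ≤ ε := by
  intro ε hε
  set B : ℝ := |z₀.im| + h with hB
  set M : ℝ := 13 * Real.exp ((6+|a|)^2/4 + (6*B+3 + B^2 + |a| * (1 + |z₀.re|))) with hM
  have hMpos : 0 < M := by positivity
  refine ⟨min 1 (ε/M), by positivity, ?_⟩
  intro h' hne hδ ζ hζ
  set w : ℂ := z₀ - ζ with hw
  set u : ℂ := -(2*w*h' + h'^2) with hu
  set W : ℝ := ‖w‖ with hW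
  set H : ℝ := ‖h'‖ with hH
  have hWnn : 0 ≤ W := norm_nonneg w
  have hHpos : 0 < H := norm_pos_iff.mpr hne
  have hH1 : H ≤ 1 := le_of_lt (lt_of_lt_of_le hδ (min_le_left _ _))
  -- algebraic rewriting of the expression
  have key : (Complex.exp (-(z₀ + h' - ζ) ^ 2) - Complex.exp (-(z₀ - ζ) ^ 2)) / h' -
      (-2 * (z₀ - ζ) * Complex.exp (-(z₀ - ζ) ^ 2))
      = Complex.exp (-w^2) * ((Complex.exp u - 1 - u)/h' - h') := by
    have e1 : Complex.exp (-(z₀ + h' - ζ)^2) = Complex.exp (-w^2) * Complex.exp u := by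
      rw [← Complex.exp_add]; congr 1; rw [hu, hw]; ring
    have e2 : -(z₀ - ζ)^2 = -w^2 := by rw [hw]
    rw [e1, e2, hw]
    field_simp
    ring
  -- bound on |u|
  have hu_abs : ‖u‖ ≤ (2*W+1) * H := by
    have : ‖u‖ ≤ 2*W*H + H^2 := by
      rw [hu, norm_neg]
      calc ‖2*w*h' + h'^2‖
          ≤ ‖2*w*h'‖ + ‖h'^2‖ := norm_add_le _ _
        _ = 2*W*H + H^2 := by
            rw [norm_mul, norm_mul, norm_pow]; simp [hW, hH]
    nlinarith
  -- bound on the remainder term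
  have hrem : ‖Complex.exp u - 1 - u‖ ≤ 3*(2*W+1)^2 * Real.exp (2*W+1) * H^2 := by
    calc ‖Complex.exp u - 1 - u‖
        ≤ 3 * ‖u‖ ^ 2 * Real.exp (‖u‖) := aux_exp_bound u
      _ ≤ 3 * ((2*W+1)*H)^2 * Real.exp (2*W+1) := by
          have h1 : ‖u‖ ^ 2 ≤ ((2*W+1)*H)^2 :=
            pow_le_pow_left₀ (norm_nonneg u) hu_abs 2
          have h2 : Real.exp (‖u‖) ≤ Real.exp (2*W+1) := by
            apply Real.exp_le_exp.2
            calc ‖u‖ ≤ (2*W+1)*H := hu_abs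
              _ ≤ (2*W+1)*1 := by nlinarith
              _ = 2*W+1 := mul_one _
          have h3 : (0:ℝ) ≤ 3 * ‖u‖ ^ 2 := by positivity
          calc 3 * ‖u‖ ^ 2 * Real.exp (‖u‖)
              ≤ 3 * ((2*W+1)*H)^2 * Real.exp (‖u‖) := by
                apply mul_le_mul_of_nonneg_right _ (Real.exp_pos _).le; nlinarith
            _ ≤ 3 * ((2*W+1)*H)^2 * Real.exp (2*W+1) := by
                apply mul_le_mul_of_nonneg_left h2; positivity
      _ = 3*(2*W+1)^2 * Real.exp (2*W+1) * H^2 := by ring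
  -- bound on the complex-absolute-value part
  set t : ℝ := |w.re| with ht
  have hre : (-w^2).re = w.im^2 - w.re^2 := by
    simp [pow_two, Complex.mul_re]; try ring
  have him : |w.im| ≤ B := by
    rw [hw, hB]
    calc |(z₀ - ζ).im| = |z₀.im - ζ.im| := by simp
      _ ≤ |z₀.im| + |ζ.im| := abs_sub _ _
      _ ≤ |z₀.im| + h := by linarith
  have hgauss : Real.exp ((-w^2).re) ≤ Real.exp (B^2 - t^2) := by
    apply Real.exp_le_exp.2
    rw [hre]
    have : w.im^2 ≤ B^2 := by nlinarith [abs_nonneg w.im, _root_.sq_abs w.im]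
    have h2 : w.re^2 = t^2 := (_root_.sq_abs w.re).symm
    linarith
  have habs1 : ‖Complex.exp (-w^2) * ((Complex.exp u - 1 - u)/h' - h')‖
      ≤ Real.exp (B^2 - t^2) * (3*(2*W+1)^2 * Real.exp (2*W+1) * H + H) := by
    rw [norm_mul, Complex.norm_exp]
    have h1 : ‖(Complex.exp u - 1 - u)/h' - h'‖
        ≤ 3*(2*W+1)^2 * Real.exp (2*W+1) * H + H := by
      calc ‖(Complex.exp u - 1 - u)/h' - h'‖
          ≤ ‖(Complex.exp u - 1 - u)/h'‖ + ‖h'‖ :=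
            norm_sub_le _ _
        _ = ‖Complex.exp u - 1 - u‖ / H + H := by rw [norm_div]
        _ ≤ (3*(2*W+1)^2 * Real.exp (2*W+1) * H^2) / H + H := by
            gcongr
        _ = 3*(2*W+1)^2 * Real.exp (2*W+1) * H + H := by
            field_simp
    calc Real.exp ((-w^2).re) * ‖(Complex.exp u - 1 - u)/h' - h'‖
        ≤ Real.exp ((-w^2).re) * (3*(2*W+1)^2 * Real.exp (2*W+1) * H + H) := by
          apply mul_le_mul_of_nonneg_left h1 (Real.exp_pos _).le
      _ ≤ Real.exp (B^2 - t^2) * (3*(2*W+1)^2 * Real.exp (2*W+1) * H + H) := by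
          apply mul_le_mul_of_nonneg_right hgauss; positivity
  -- weight bound
  have hweight : (Real.exp (a * |ζ.re| ^ γ))⁻¹ ≤ Real.exp (|a| * (1 + |ζ.re|)) := by
    rw [← Real.exp_neg]
    apply Real.exp_le_exp.2
    have hpow : |ζ.re| ^ γ ≤ 1 + |ζ.re| := by
      rcases le_or_gt (|ζ.re|) 1 with hs | hs
      · have := Real.rpow_le_one (abs_nonneg _) hs hγ0.le
        linarith [abs_nonneg ζ.re]
      · have h1 : |ζ.re| ^ γ ≤ |ζ.re| ^ (1:ℝ) :=
          Real.rpow_le_rpow_of_exponent_le hs.le hγ1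
        rw [Real.rpow_one] at h1
        linarith
    have hpnn : (0:ℝ) ≤ |ζ.re| ^ γ := Real.rpow_nonneg (abs_nonneg _) _
    calc -(a * |ζ.re| ^ γ) ≤ |a| * |ζ.re| ^ γ := by
          rw [neg_mul_eq_neg_mul]
          exact mul_le_mul_of_nonneg_right (neg_le_abs a) hpnn
      _ ≤ |a| * (1 + |ζ.re|) := mul_le_mul_of_nonneg_left hpow (abs_nonneg a)
  -- put everything together
  have hsre : |ζ.re| ≤ t + |z₀.re| := by
    have : ζ.re = z₀.re - w.re := by rw [hw]; simp
    rw [this, ht]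
    calc |z₀.re - w.re| ≤ |z₀.re| + |w.re| := abs_sub _ _
      _ = |w.re| + |z₀.re| := by ring
  have hfinal : Real.exp (B^2 - t^2) * (3*(2*W+1)^2 * Real.exp (2*W+1) * H + H) *
      Real.exp (|a| * (1 + |ζ.re|)) ≤ H * M :=
    aux_main B |a| |z₀.re| t |ζ.re| W H (by positivity) hWnn (abs_nonneg _)
      (by rw [hW, ht, hw, hB]
          calc ‖z₀ - ζ‖ ≤ |(z₀-ζ).re| + |(z₀-ζ).im| :=
              Complex.norm_le_abs_re_add_abs_im _
            _ ≤ |(z₀-ζ).re| + (|z₀.im| + h) := by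
                have : |(z₀ - ζ).im| ≤ |z₀.im| + h := him
                linarith)
      hsre hHpos.le (abs_nonneg a)
  rw [key]
  calc ‖Complex.exp (-w^2) * ((Complex.exp u - 1 - u)/h' - h')‖ *
        (Real.exp (a * |ζ.re| ^ γ))⁻¹
      ≤ (Real.exp (B^2 - t^2) * (3*(2*W+1)^2 * Real.exp (2*W+1) * H + H)) *
        Real.exp (|a| * (1 + |ζ.re|)) := by
        apply mul_le_mul habs1 hweight (by positivity) (by positivity)
    _ ≤ H * M := hfinal
    _ ≤ (ε/M) * M := by
        apply mul_le_mul_of_nonneg_right _ hMpos.le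
        exact le_of_lt (lt_of_lt_of_le hδ (min_le_right _ _))
    _ = ε := by field_simp
end

section
/- Let t ≥ 1 and let K ⊂ ℝ be compact. Define U_t(K) := {z ∈ ℂ : dist(z, K) < 1/t}. Then U_t(K) has only finitely many connected components; in fact at most t·(diam(K))/2 + 1 components, and each component Z satisfies λ(Z ∩ ℝ) ≥ 2/t where λ is Lebesgue measure on ℝ. -/
open Set Metric MeasureTheory ENNReal

theorem stmt12 (t : ℝ) (ht : 1 ≤ t) (K : Set ℝ) (hK : IsCompact K)
    (U : Set ℂ) (hU : U = {z : ℂ | ∃ x ∈ K, dist z (x : ℂ) < 1 / t})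
    (S : Set (Set ℂ)) (hS : S = {Z | ∃ z ∈ U, Z = connectedComponentIn U z}) :
    S.Finite ∧ (S.ncard : ℝ) ≤ t * Metric.diam K / 2 + 1 ∧
      ∀ Z ∈ S, ENNReal.ofReal (2 / t) ≤ MeasureTheory.volume {x : ℝ | (x : ℂ) ∈ Z} := by
  have ht0 : (0:ℝ) < t := lt_of_lt_of_le one_pos ht
  have hr0 : (0:ℝ) < 1 / t := by positivity
  have hUopen : IsOpen U := by
    rw [hU]
    have : {z : ℂ | ∃ x ∈ K, dist z (x:ℂ) < 1/t} = ⋃ x ∈ K, Metric.ball (x:ℂ) (1/t) := by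
      ext z; simp [Metric.mem_ball]
    rw [this]
    exact isOpen_biUnion fun x _ => Metric.isOpen_ball
  have key : ∀ Z ∈ S, ∃ x ∈ K, Set.Ioo (x - 1/t) (x + 1/t) ⊆ {y : ℝ | (y:ℂ) ∈ Z} := by
    intro Z hZ
    rw [hS] at hZ
    obtain ⟨z, hzU, rfl⟩ := hZ
    have hzU' := hzU
    rw [hU] at hzU'
    obtain ⟨x, hxK, hdz⟩ := hzU'
    refine ⟨x, hxK, ?_⟩
    have hball : Metric.ball (x:ℂ) (1/t) ⊆ U := by
      rw [hU]; intro w hw; exact ⟨x, hxK, Metric.mem_ball.mp hw⟩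
    have hsub : Metric.ball (x:ℂ) (1/t) ⊆ connectedComponentIn U z :=
      (convex_ball (x:ℂ) (1/t)).isPreconnected.subset_connectedComponentIn
        (Metric.mem_ball.mpr hdz) hball
    intro y hy
    have hd : dist (y:ℂ) (x:ℂ) < 1/t := by
      rw [Complex.isometry_ofReal.dist_eq, Real.dist_eq, abs_lt]
      exact ⟨by linarith [hy.1], by linarith [hy.2]⟩
    exact hsub (Metric.mem_ball.mpr hd)
  have part3 : ∀ Z ∈ S, ENNReal.ofReal (2/t) ≤ volume {x : ℝ | (x:ℂ) ∈ Z} := by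
    intro Z hZ
    obtain ⟨x, _, hsub⟩ := key Z hZ
    calc ENNReal.ofReal (2/t) = volume (Set.Ioo (x - 1/t) (x + 1/t)) := by
          rw [Real.volume_Ioo]; congr 1; ring
      _ ≤ volume {x : ℝ | (x:ℂ) ∈ Z} := measure_mono hsub
  have hZopen : ∀ Z ∈ S, IsOpen Z := by
    intro Z hZ; rw [hS] at hZ; obtain ⟨z, _, rfl⟩ := hZ
    exact hUopen.connectedComponentIn
  have hdisj : S.PairwiseDisjoint (fun Z => {y : ℝ | (y:ℂ) ∈ Z}) := by
    intro Z1 h1 Z2 h2 hne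
    rw [hS] at h1 h2
    obtain ⟨z1, hz1, rfl⟩ := h1
    obtain ⟨z2, hz2, rfl⟩ := h2
    have hdc : Disjoint (connectedComponentIn U z1) (connectedComponentIn U z2) := by
      rw [Set.disjoint_iff_inter_eq_empty]
      by_contra h
      obtain ⟨w, hw1, hw2⟩ := Set.nonempty_iff_ne_empty.mpr h
      exact hne (by rw [connectedComponentIn_eq hw1, connectedComponentIn_eq hw2])
    exact hdc.preimage _
  have count : ∀ F : Finset (Set ℂ), ↑F ⊆ S → (F.card : ℝ) ≤ t * Metric.diam K / 2 + 1 := by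
    intro F hF
    rcases F.eq_empty_or_nonempty with rfl | ⟨Z0, hZ0⟩
    · simp
      positivity
    · obtain ⟨x0, hx0, -⟩ := key Z0 (hF hZ0)
      have hKne : K.Nonempty := ⟨x0, hx0⟩
      have hbdd := hK.isBounded
      have haK : sInf K ∈ K := hK.sInf_mem hKne
      have hbK : sSup K ∈ K := hK.sSup_mem hKne
      have hab : sSup K - sInf K ≤ Metric.diam K := by
        have h := Metric.dist_le_diam_of_mem hbdd hbK haK
        rw [Real.dist_eq] at h
        exact le_trans (le_abs_self _) h
      have hba : sInf K ≤ sSup K := csInf_le_csSup hKne hbdd.bddBelow hbdd.bddAbove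
      have htrace : ∀ Z ∈ F, {y : ℝ | (y:ℂ) ∈ Z} ⊆ Set.Icc (sInf K - 1/t) (sSup K + 1/t) := by
        intro Z hZ y hy
        have hZS := hF hZ
        rw [hS] at hZS
        obtain ⟨z, hzU, rfl⟩ := hZS
        have hyU : (y:ℂ) ∈ U := connectedComponentIn_subset U z hy
        rw [hU] at hyU
        obtain ⟨x, hxK, hd⟩ := hyU
        rw [Complex.isometry_ofReal.dist_eq, Real.dist_eq, abs_lt] at hd
        have h1 : sInf K ≤ x := csInf_le hbdd.bddBelow hxK
        have h2 : x ≤ sSup K := le_csSup hbdd.bddAbove hxK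
        exact ⟨by linarith [hd.1], by linarith [hd.2]⟩
      have hmeas : ∀ Z ∈ F, MeasurableSet {y : ℝ | (y:ℂ) ∈ Z} := fun Z hZ =>
        ((hZopen Z (hF hZ)).preimage Complex.continuous_ofReal).measurableSet
      have hsum : volume (⋃ Z ∈ F, {y : ℝ | (y:ℂ) ∈ Z}) = ∑ Z ∈ F, volume {y : ℝ | (y:ℂ) ∈ Z} :=
        measure_biUnion_finset (hdisj.subset hF) hmeas
      have hle1 : ENNReal.ofReal ((F.card : ℝ) * (2/t)) ≤ ENNReal.ofReal (Metric.diam K + 2/t) := by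
        calc ENNReal.ofReal ((F.card : ℝ) * (2/t))
            = (F.card : ℝ≥0∞) * ENNReal.ofReal (2/t) := by
              rw [ENNReal.ofReal_mul (by positivity), ENNReal.ofReal_natCast]
          _ = ∑ _Z ∈ F, ENNReal.ofReal (2/t) := by rw [Finset.sum_const, nsmul_eq_mul]
          _ ≤ ∑ Z ∈ F, volume {y : ℝ | (y:ℂ) ∈ Z} :=
              Finset.sum_le_sum fun Z hZ => part3 Z (hF hZ)
          _ = volume (⋃ Z ∈ F, {y : ℝ | (y:ℂ) ∈ Z}) := hsum.symm
          _ ≤ volume (Set.Icc (sInf K - 1/t) (sSup K + 1/t)) :=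
              measure_mono (Set.iUnion₂_subset htrace)
          _ = ENNReal.ofReal (sSup K + 1/t - (sInf K - 1/t)) := Real.volume_Icc
          _ ≤ ENNReal.ofReal (Metric.diam K + 2/t) := by
              apply ENNReal.ofReal_le_ofReal
              have h2t : (2:ℝ)/t = 2*(1/t) := by ring
              linarith
      have hc : (F.card : ℝ) * (2/t) ≤ Metric.diam K + 2/t := by
        have hD : (0:ℝ) ≤ Metric.diam K := Metric.diam_nonneg
        rw [ENNReal.ofReal_le_ofReal_iff (by positivity)] at hle1
        exact hle1
      have ht' : t ≠ 0 := ht0.ne'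
      have hc' : (F.card : ℝ) * 2 ≤ Metric.diam K * t + 2 := by
        have := mul_le_mul_of_nonneg_right hc ht0.le
        field_simp at this
        linarith
      linarith [mul_nonneg (Metric.diam_nonneg (s := K)) ht0.le, hc']
  have hfin : S.Finite := by
    by_contra hinf
    have hinf' : S.Infinite := hinf
    obtain ⟨F, hFS, hFcard⟩ := hinf'.exists_subset_card_eq (⌈t * Metric.diam K / 2⌉₊ + 2)
    have h := count F hFS
    rw [hFcard] at h
    have h1 : t * Metric.diam K / 2 ≤ ⌈t * Metric.diam K / 2⌉₊ := Nat.le_ceil _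
    push_cast at h
    linarith
  refine ⟨hfin, ?_, part3⟩
  have hsub : ↑hfin.toFinset ⊆ S := by simp
  have h := count hfin.toFinset hsub
  rwa [Set.ncard_eq_toFinset_card _ hfin]
end

section
/- Let (a_n) be strictly increasing with all a_n < 0 and lim a_n = 0, let 0 < γ ≤ 1, ν_n(z) := exp(a_n |Re z|^γ), and let c_n := exp(1/a_n). Fix p < q < k in ℕ and set θ := ln(c_p/c_q)/ln(c_p/c_k). Then there exists C > 0 such that for all ζ ∈ ℝ with |ζ| ≥ 1 + 1/c_k: (sup_{|z−ζ|≤c_k} ν_k(z))^θ · (sup_{|z−ζ|≤c_p} ν_p(z))^{1−θ} ≤ C · inf_{|z−ζ|≤c_q} ν_q(z). -/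
lemma aux_rpow_subadd {x y γ : ℝ} (hx : 0 ≤ x) (hy : 0 ≤ y) (h0 : 0 ≤ γ) (h1 : γ ≤ 1) :
    (x + y) ^ γ ≤ x ^ γ + y ^ γ := by
  have h := NNReal.rpow_add_le_add_rpow (Real.toNNReal x) (Real.toNNReal y) h0 h1
  have hx' : ((x.toNNReal : ℝ)) = x := Real.coe_toNNReal x hx
  have hy' : ((y.toNNReal : ℝ)) = y := Real.coe_toNNReal y hy
  rw [← hx', ← hy']
  exact_mod_cast h

set_option maxHeartbeats 1000000 in
theorem stmt14 (a : ℕ → ℝ) (ha : StrictMono a) (hneg : ∀ n, a n < 0)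
    (hlim : Filter.Tendsto a Filter.atTop (nhds 0))
    (γ : ℝ) (hγ0 : 0 < γ) (hγ1 : γ ≤ 1)
    (ν : ℕ → ℂ → ℝ) (hν : ∀ n z, ν n z = Real.exp (a n * |z.re| ^ γ))
    (c : ℕ → ℝ) (hc : ∀ n, c n = Real.exp (1 / a n))
    (p q k : ℕ) (hpq : p < q) (hqk : q < k)
    (θ : ℝ) (hθ : θ = Real.log (c p / c q) / Real.log (c p / c k)) :
    ∃ C > 0, ∀ ζ : ℝ, 1 + 1 / c k ≤ |ζ| →
      sSup (ν k '' Metric.closedBall (ζ : ℂ) (c k)) ^ θ *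
          sSup (ν p '' Metric.closedBall (ζ : ℂ) (c p)) ^ (1 - θ) ≤
        C * sInf (ν q '' Metric.closedBall (ζ : ℂ) (c q)) := by
  have hpq' : a p < a q := ha hpq
  have hqk' : a q < a k := ha hqk
  have hkneg : a k < 0 := hneg k
  have hqneg : a q < 0 := hneg q
  have hpneg : a p < 0 := hneg p
  have hpne : a p ≠ 0 := ne_of_lt hpneg
  have hqne : a q ≠ 0 := ne_of_lt hqneg
  have hkne : a k ≠ 0 := ne_of_lt hkneg
  -- reciprocal comparison for negative values
  have hinv : ∀ m n : ℕ, a m < a n → 1 / a n < 1 / a m := by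
    intro m n h
    have hm := hneg m; have hn := hneg n
    have he : 1 / a m - 1 / a n = (a n - a m) / (a m * a n) := by
      rw [div_sub_div _ _ (ne_of_lt hm) (ne_of_lt hn), one_mul, mul_one]
    have hpos := div_pos (by linarith : (0:ℝ) < a n - a m)
      (mul_pos_of_neg_of_neg hm hn)
    rw [← he] at hpos
    linarith
  -- c values
  have hcpos : ∀ n, 0 < c n := fun n => (hc n).symm ▸ Real.exp_pos _
  have hclt1 : ∀ n, c n < 1 := by
    intro n
    rw [hc n]
    have h1 : 1 / a n < 0 := div_neg_of_pos_of_neg one_pos (hneg n)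
    calc Real.exp (1 / a n) < Real.exp 0 := Real.exp_lt_exp.2 h1
    _ = 1 := Real.exp_zero
  have hckp : c k < c p := by
    rw [hc k, hc p]; exact Real.exp_lt_exp.2 (hinv p k (by linarith))
  -- θ facts
  have hlogpq : Real.log (c p / c q) = 1 / a p - 1 / a q := by
    rw [hc p, hc q, ← Real.exp_sub, Real.log_exp]
  have hlogpk : Real.log (c p / c k) = 1 / a p - 1 / a k := by
    rw [hc p, hc k, ← Real.exp_sub, Real.log_exp]
  have hden : 0 < 1 / a p - 1 / a k := sub_pos.2 (hinv p k (by linarith))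
  have hnum : 0 < 1 / a p - 1 / a q := sub_pos.2 (hinv p q hpq')
  have hθ0 : 0 ≤ θ := by
    rw [hθ, hlogpq, hlogpk]; exact div_nonneg hnum.le hden.le
  have hθ1 : θ ≤ 1 := by
    rw [hθ, hlogpq, hlogpk]
    rw [div_le_one hden]
    have := hinv q k hqk'
    linarith
  -- the key convexity inequality
  have hkey : θ * a k + (1 - θ) * a p ≤ a q := by
    have hDne : (1 / a p - 1 / a k) ≠ 0 := ne_of_gt hden
    have ht : θ * (1 / a p - 1 / a k) = 1 / a p - 1 / a q := by
      rw [hθ, hlogpq, hlogpk, div_mul_cancel₀ _ hDne]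
    have ht' : θ * (a q * (a k - a p)) = (a q - a p) * a k := by
      rw [hθ, hlogpq, hlogpk, div_mul_eq_mul_div, div_eq_iff hDne]
      field_simp
    have hD : a q * (a k - a p) < 0 := mul_neg_of_neg_of_pos hqneg (by linarith)
    have key : (a q - θ * a k - (1 - θ) * a p) * (a q * (a k - a p)) =
        (a q - a p) * (a k - a p) * (a q - a k) := by linear_combination (a p - a k) * ht'
    have hR : (a q - a p) * (a k - a p) * (a q - a k) < 0 := by
      apply mul_neg_of_pos_of_neg
      · exact mul_pos (by linarith) (by linarith)
      · linarith
    nlinarith [key, hR, hD]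
  -- choose C
  refine ⟨Real.exp (-a q * (c p + c q) ^ γ), Real.exp_pos _, ?_⟩
  intro ζ hζ
  have hζ1 : 1 ≤ |ζ| := by
    have h0 : 0 < 1 / c k := div_pos one_pos (hcpos k)
    linarith
  -- bounds on |z.re| over the ball
  have hre : ∀ (r : ℝ) (z : ℂ), z ∈ Metric.closedBall (ζ : ℂ) r →
      |ζ| - r ≤ |z.re| ∧ |z.re| ≤ |ζ| + r := by
    intro r z hz
    rw [Metric.mem_closedBall, Complex.dist_eq] at hz
    have h1 : |z.re - ζ| ≤ r := by
      have h := Complex.abs_re_le_norm (z - (ζ : ℂ))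
      simp only [Complex.sub_re, Complex.ofReal_re] at h
      linarith
    have h2 : abs (|z.re| - |ζ|) ≤ |z.re - ζ| := abs_abs_sub_abs_le_abs_sub _ _
    have h3 := abs_le.1 (h2.trans h1)
    exact ⟨by linarith [h3.1], by linarith [h3.2]⟩
  -- sup bounds
  have hsup : ∀ n : ℕ, c n < 1 → a n < 0 →
      sSup (ν n '' Metric.closedBall (ζ : ℂ) (c n)) ≤
        Real.exp (a n * (|ζ| - c n) ^ γ) := by
    intro n hcn han
    apply Real.sSup_le _ (Real.exp_pos _).le
    rintro x ⟨z, hz, rfl⟩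
    rw [hν]
    apply Real.exp_le_exp.2
    apply mul_le_mul_of_nonpos_left _ han.le
    exact Real.rpow_le_rpow (by linarith) (hre (c n) z hz).1 hγ0.le
  have hsup0 : ∀ n : ℕ, 0 ≤ sSup (ν n '' Metric.closedBall (ζ : ℂ) (c n)) := by
    intro n
    apply Real.sSup_nonneg
    rintro x ⟨z, hz, rfl⟩
    rw [hν]; exact (Real.exp_pos _).le
  -- inf bound
  have hinf : Real.exp (a q * (|ζ| + c q) ^ γ) ≤
      sInf (ν q '' Metric.closedBall (ζ : ℂ) (c q)) := by
    apply le_csInf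
    · exact (Metric.nonempty_closedBall.2 (hcpos q).le).image _
    · rintro x ⟨z, hz, rfl⟩
      rw [hν]
      apply Real.exp_le_exp.2
      apply mul_le_mul_of_nonpos_left _ hqneg.le
      exact Real.rpow_le_rpow (abs_nonneg _) (hre (c q) z hz).2 hγ0.le
  -- combine
  set Xk := (|ζ| - c k) ^ γ with hXk
  set Xp := (|ζ| - c p) ^ γ with hXp
  set Y := (|ζ| + c q) ^ γ with hY
  set S := (c p + c q) ^ γ with hS
  have hXp0 : 0 ≤ Xp := Real.rpow_nonneg (by linarith [hclt1 p]) _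
  have hXpXk : Xp ≤ Xk :=
    Real.rpow_le_rpow (by linarith [hclt1 p]) (by linarith) hγ0.le
  have hYle : Y ≤ Xp + S := by
    have : |ζ| + c q = (|ζ| - c p) + (c p + c q) := by ring
    rw [hY, this]
    exact aux_rpow_subadd (by linarith [hclt1 p]) (by linarith [hcpos p, hcpos q]) hγ0.le hγ1
  have h1 : sSup (ν k '' Metric.closedBall (ζ : ℂ) (c k)) ^ θ ≤
      Real.exp (a k * Xk) ^ θ :=
    Real.rpow_le_rpow (hsup0 k) (hsup k (hclt1 k) hkneg) hθ0
  have h2 : sSup (ν p '' Metric.closedBall (ζ : ℂ) (c p)) ^ (1 - θ) ≤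
      Real.exp (a p * Xp) ^ (1 - θ) :=
    Real.rpow_le_rpow (hsup0 p) (hsup p (hclt1 p) hpneg) (by linarith)
  calc sSup (ν k '' Metric.closedBall (ζ : ℂ) (c k)) ^ θ *
        sSup (ν p '' Metric.closedBall (ζ : ℂ) (c p)) ^ (1 - θ)
      ≤ Real.exp (a k * Xk) ^ θ * Real.exp (a p * Xp) ^ (1 - θ) := by
        apply mul_le_mul h1 h2 (Real.rpow_nonneg (hsup0 p) _) (Real.rpow_nonneg _ _)
        exact (Real.exp_pos _).le
    _ = Real.exp (a k * Xk * θ + a p * Xp * (1 - θ)) := by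
        rw [← Real.exp_mul, ← Real.exp_mul, ← Real.exp_add]
    _ ≤ Real.exp (-a q * S + a q * Y) := by
        apply Real.exp_le_exp.2
        have e1 : a k * Xk * θ ≤ a k * Xp * θ := by
          apply mul_le_mul_of_nonneg_right _ hθ0
          exact mul_le_mul_of_nonpos_left hXpXk hkneg.le
        have e2 : (θ * a k + (1 - θ) * a p) * Xp ≤ a q * Xp :=
          mul_le_mul_of_nonneg_right hkey hXp0
        have e3 : a q * Xp ≤ -a q * S + a q * Y := by
          nlinarith [mul_nonneg (neg_nonneg.2 hqneg.le) (sub_nonneg.2 hYle)]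
        nlinarith [e1, e2, e3]
    _ = Real.exp (-a q * S) * Real.exp (a q * Y) := (Real.exp_add _ _)
    _ ≤ Real.exp (-a q * S) * sInf (ν q '' Metric.closedBall (ζ : ℂ) (c q)) := by
        apply mul_le_mul_of_nonneg_left hinf (Real.exp_pos _).le
end
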